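/- Let n and r be integers with 1 ≤ r ≤ n − 2. Every finite simple graph G on n vertices with vertex connectivity exactly r satisfies H(G) ≤ H(K(n−1,r)), with equality if and only if G is isomorphic to K(n−1,r). -/

import Mathlib

open SimpleGraph Finset
open scoped Classical

/-- The Harary index of a finite simple graph: sum of reciprocals of distances over
unordered pairs of distinct vertices (pairs at infinite distance contribute `0`,
since `SimpleGraph.dist` is `0` there and `1/0 = 0` in `ℝ`). -/
noncomputable def hararyIndex {V : Type*} [Fintype V] (G : SimpleGraph V) : ℝ :=
  (∑ u : V, ∑ v : V, (1 : ℝ) / (G.dist u v)) / 2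

/-- The graph `K(n-1, r)` on `n` vertices: a complete graph `K_{n-1}` on the first
`n - 1` vertices, together with one extra vertex (the last one) joined to exactly the
first `r` vertices of the `K_{n-1}`. -/
def Knr (n r : ℕ) : SimpleGraph (Fin n) :=
  SimpleGraph.fromRel (fun a b =>
    ((a : ℕ) < n - 1 ∧ (b : ℕ) < n - 1) ∨ ((a : ℕ) = n - 1 ∧ (b : ℕ) < r))

/-- The vertex connectivity of `G`: the least number of vertices whose deletion yields
a disconnected graph or a single vertex. -/
noncomputable def vertexConnectivity {V : Type*} [Fintype V] (G : SimpleGraph V) : ℕ :=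
  sInf {k | ∃ S : Set V, S.ncard = k ∧
    (¬ (G.induce (Sᶜ : Set V)).Connected ∨ (Sᶜ : Set V).ncard = 1)}

/-- The set of ordered pairs of distinct, non-adjacent vertices. -/
noncomputable def badP {V : Type*} [Fintype V] (G : SimpleGraph V) : Finset (V × V) :=
  Finset.univ.filter fun p => p.1 ≠ p.2 ∧ ¬ G.Adj p.1 p.2
lemma iso_dist_le {V W : Type*} {G : SimpleGraph V} {H : SimpleGraph W} (f : G ≃g H) (u v : V) :
    H.dist (f u) (f v) ≤ G.dist u v := by
  by_cases h : G.Reachable u v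
  · obtain ⟨p, hp⟩ := h.exists_walk_length_eq_dist
    calc H.dist (f u) (f v) ≤ (p.map f.toHom).length := dist_le _
      _ = p.length := p.length_map _
      _ = G.dist u v := hp
  · have h' : ¬ H.Reachable (f u) (f v) := by
      intro h'
      exact h (by simpa using h'.map f.symm.toHom)
    simp [dist_eq_zero_of_not_reachable h, dist_eq_zero_of_not_reachable h']

lemma iso_dist_eq {V W : Type*} {G : SimpleGraph V} {H : SimpleGraph W} (f : G ≃g H) (u v : V) :
    H.dist (f u) (f v) = G.dist u v := by
  refine le_antisymm (iso_dist_le f u v) ?_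
  have := iso_dist_le f.symm (f u) (f v)
  simpa using this


lemma term_le {V : Type*} [Fintype V] (G : SimpleGraph V) (u v : V) :
    (1 : ℝ) / (G.dist u v) ≤
      (if u ≠ v then (1:ℝ) else 0) - (if u ≠ v ∧ ¬ G.Adj u v then (1:ℝ)/2 else 0) := by
  by_cases huv : u = v
  · subst huv; simp
  by_cases hadj : G.Adj u v
  · have : G.dist u v = 1 := dist_eq_one_iff_adj.mpr hadj
    simp [huv, hadj, this]
  · rw [if_pos (show u ≠ v from huv), if_pos ⟨huv, hadj⟩]
    have hd1 : G.dist u v ≠ 1 := fun h => hadj (dist_eq_one_iff_adj.mp h)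
    rcases Nat.eq_zero_or_pos (G.dist u v) with h0 | hpos
    · rw [h0]; norm_num
    · have h2 : 2 ≤ G.dist u v := by omega
      have : (1:ℝ) / (G.dist u v) ≤ 1/2 := by
        apply one_div_le_one_div_of_le <;> [norm_num; exact_mod_cast h2]
      linarith

lemma term_eq {V : Type*} [Fintype V] (G : SimpleGraph V) (u v : V)
    (h2 : u ≠ v → ¬ G.Adj u v → G.dist u v = 2) :
    (1 : ℝ) / (G.dist u v) =
      (if u ≠ v then (1:ℝ) else 0) - (if u ≠ v ∧ ¬ G.Adj u v then (1:ℝ)/2 else 0) := by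
  by_cases huv : u = v
  · subst huv; simp
  by_cases hadj : G.Adj u v
  · have : G.dist u v = 1 := dist_eq_one_iff_adj.mpr hadj
    simp [huv, hadj, this]
  · have := h2 huv hadj
    simp [huv, hadj, this]
    norm_num

lemma sum_w {V : Type*} [Fintype V] (G : SimpleGraph V) :
    ∑ u : V, ∑ v : V, ((if u ≠ v then (1:ℝ) else 0) - (if u ≠ v ∧ ¬ G.Adj u v then (1:ℝ)/2 else 0))
      = ((Fintype.card V : ℝ) * (Fintype.card V) - Fintype.card V) - (badP G).card / 2 := by
  rw [← Finset.sum_product']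
  rw [Finset.sum_sub_distrib]
  congr 1
  · rw [Finset.sum_ite, Finset.sum_const, Finset.sum_const]
    have h1 : ((univ ×ˢ univ : Finset (V × V)).filter fun p => p.1 ≠ p.2) = Finset.univ.offDiag := by
      ext p; simp
    have hle : Fintype.card V ≤ Fintype.card V * Fintype.card V := by
      rcases Nat.eq_zero_or_pos (Fintype.card V) with h|h
      · simp [h]
      · exact Nat.le_mul_of_pos_left _ h
    rw [h1, Finset.offDiag_card]
    simp only [nsmul_eq_mul, mul_one, smul_zero, add_zero, Finset.card_univ]
    rw [Nat.cast_sub hle]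
    push_cast
    ring
  · rw [Finset.sum_ite, Finset.sum_const, Finset.sum_const]
    have h2 : ((univ ×ˢ univ : Finset (V × V)).filter fun p => p.1 ≠ p.2 ∧ ¬ G.Adj p.1 p.2) = badP G := by
      rw [badP]
      congr 1
    rw [h2]
    simp only [nsmul_eq_mul, mul_one, smul_zero, add_zero]
    ring


lemma harary_le_aux {V : Type*} [Fintype V] (G : SimpleGraph V) :
    hararyIndex G ≤ (((Fintype.card V : ℝ) * (Fintype.card V) - Fintype.card V)
      - (badP G).card / 2) / 2 := by
  rw [hararyIndex, ← sum_w G]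
  have : ∑ u : V, ∑ v : V, (1 : ℝ) / (G.dist u v) ≤
      ∑ u : V, ∑ v : V, ((if u ≠ v then (1:ℝ) else 0)
        - (if u ≠ v ∧ ¬ G.Adj u v then (1:ℝ)/2 else 0)) :=
    Finset.sum_le_sum fun u _ => Finset.sum_le_sum fun v _ => term_le G u v
  linarith

lemma harary_eq_aux {V : Type*} [Fintype V] (G : SimpleGraph V)
    (h2 : ∀ u v : V, u ≠ v → ¬ G.Adj u v → G.dist u v = 2) :
    hararyIndex G = (((Fintype.card V : ℝ) * (Fintype.card V) - Fintype.card V)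
      - (badP G).card / 2) / 2 := by
  rw [hararyIndex, ← sum_w G]
  congr 1
  exact Finset.sum_congr rfl fun u _ => Finset.sum_congr rfl fun v _ => term_eq G u v (h2 u v)


lemma harary_iso {V W : Type*} [Fintype V] [Fintype W] {G : SimpleGraph V} {H : SimpleGraph W}
    (f : G ≃g H) : hararyIndex G = hararyIndex H := by
  rw [hararyIndex, hararyIndex]
  congr 1
  refine Fintype.sum_equiv f.toEquiv _ _ fun u => ?_
  refine Fintype.sum_equiv f.toEquiv _ _ fun v => ?_
  rw [show H.dist (f.toEquiv u) (f.toEquiv v) = G.dist u v from iso_dist_eq f u v]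


lemma Knr_adj {n r : ℕ} (hr : r ≤ n - 1) (a b : Fin n) :
    (Knr n r).Adj a b ↔ a ≠ b ∧ ((a:ℕ) = n-1 → (b:ℕ) < r) ∧ ((b:ℕ) = n-1 → (a:ℕ) < r) := by
  have ha : (a:ℕ) ≤ n - 1 := Nat.le_pred_of_lt a.isLt
  have hb : (b:ℕ) ≤ n - 1 := Nat.le_pred_of_lt b.isLt
  have hab : a ≠ b ↔ (a:ℕ) ≠ (b:ℕ) := by simp [Fin.ext_iff]
  constructor
  · rintro ⟨hne, h | h⟩
    · refine ⟨hne, ?_, ?_⟩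
      · rcases h with ⟨h1, h2⟩ | ⟨h1, h2⟩
        · intro h; omega
        · intro _; exact h2
      · rcases h with ⟨h1, h2⟩ | ⟨h1, h2⟩
        · intro h; omega
        · intro h; rw [hab] at hne; omega
    · refine ⟨hne, ?_, ?_⟩
      · rcases h with ⟨h1, h2⟩ | ⟨h1, h2⟩
        · intro h; omega
        · intro h; rw [hab] at hne; omega
      · rcases h with ⟨h1, h2⟩ | ⟨h1, h2⟩
        · intro h; omega
        · intro _; exact h2
  · rintro ⟨hne, h1, h2⟩
    refine ⟨hne, ?_⟩
    rw [hab] at hne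
    by_cases hA : (a:ℕ) = n - 1
    · exact Or.inl (Or.inr ⟨hA, h1 hA⟩)
    · by_cases hB : (b:ℕ) = n - 1
      · exact Or.inr (Or.inr ⟨hB, h2 hB⟩)
      · exact Or.inl (Or.inl ⟨by omega, by omega⟩)

lemma dist_eq_two {V : Type*} {G : SimpleGraph V} {u v z : V} (hne : u ≠ v)
    (hnadj : ¬ G.Adj u v) (h1 : G.Adj u z) (h2 : G.Adj z v) : G.dist u v = 2 := by
  have hle : G.dist u v ≤ 2 := by
    have := SimpleGraph.dist_le (Walk.cons h1 (Walk.cons h2 Walk.nil))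
    simpa using this
  have hreach : G.Reachable u v := (Walk.cons h1 (Walk.cons h2 Walk.nil)).reachable
  have h0 : G.dist u v ≠ 0 := (hreach.pos_dist_of_ne hne).ne'
  have hone : G.dist u v ≠ 1 := fun h => hnadj (dist_eq_one_iff_adj.mp h)
  omega


lemma badP_Knr {n r : ℕ} (hr : 1 ≤ r) (hrn : r + 2 ≤ n) :
    badP (Knr n r) = ({(⟨n-1, by omega⟩ : Fin n)} ×ˢ (univ.filter fun j : Fin n => r ≤ (j:ℕ) ∧ (j:ℕ) < n-1))
      ∪ ((univ.filter fun j : Fin n => r ≤ (j:ℕ) ∧ (j:ℕ) < n-1) ×ˢ {(⟨n-1, by omega⟩ : Fin n)}) := by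
  ext p
  obtain ⟨a, b⟩ := p
  have ha : (a:ℕ) < n := a.isLt
  have hb : (b:ℕ) < n := b.isLt
  have hadj := Knr_adj (n := n) (r := r) (by omega) a b
  simp only [badP, Finset.mem_filter, Finset.mem_univ, true_and, Finset.mem_union,
    Finset.mem_product, Finset.mem_singleton]
  constructor
  · rintro ⟨hne, hnadj⟩
    have hne' : (a:ℕ) ≠ (b:ℕ) := fun h => hne (Fin.ext h)
    rw [hadj] at hnadj
    push_neg at hnadj
    have hh := hnadj hne
    by_cases hA : (a:ℕ) = n-1
    · by_cases hbr : (b:ℕ) < r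
      · have h2 := hh (fun _ => hbr)
        omega
      · exact Or.inl ⟨Fin.ext hA, by omega, by omega⟩
    · have h2 := hh (fun h => absurd h hA)
      exact Or.inr ⟨⟨by omega, by omega⟩, Fin.ext h2.1⟩
  · rintro (⟨hA, hrb, hbn⟩ | ⟨⟨hra, han⟩, hB⟩)
    · have hA' : (a:ℕ) = n-1 := by rw [hA]
      refine ⟨fun h => by rw [h] at hA'; omega, ?_⟩
      rw [hadj]
      rintro ⟨-, h1, -⟩
      have := h1 hA'
      omega
    · have hB' : (b:ℕ) = n-1 := by rw [hB]
      refine ⟨fun h => by rw [h] at han; omega, ?_⟩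
      rw [hadj]
      rintro ⟨-, -, h2⟩
      have := h2 hB'
      omega

lemma card_badP_Knr {n r : ℕ} (hr : 1 ≤ r) (hrn : r + 2 ≤ n) :
    (badP (Knr n r)).card = 2 * (n - 1 - r) := by
  rw [badP_Knr hr hrn]
  set T := (univ.filter fun j : Fin n => r ≤ (j:ℕ) ∧ (j:ℕ) < n-1) with hTdef
  have hT : T.card = n - 1 - r := by
    have hmem : ∀ m ∈ Finset.Ico r (n-1), m < n := by
      intro m hm
      simp only [Finset.mem_Ico] at hm
      omega
    have : T = Finset.attachFin (Finset.Ico r (n-1)) hmem := by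
      ext a
      simp [hTdef, Finset.mem_attachFin, Finset.mem_Ico, and_comm]
    rw [this, Finset.card_attachFin, Nat.card_Ico]
  have hdisj : Disjoint ({(⟨n-1, by omega⟩ : Fin n)} ×ˢ T) (T ×ˢ {(⟨n-1, by omega⟩ : Fin n)}) := by
    rw [Finset.disjoint_left]
    rintro ⟨a, b⟩ h1 h2
    simp only [Finset.mem_product, Finset.mem_singleton, hTdef, Finset.mem_filter] at h1 h2
    have : (a:ℕ) = n - 1 := by rw [h1.1]
    omega
  rw [Finset.card_union_of_disjoint hdisj, Finset.card_product, Finset.card_product,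
    Finset.card_singleton, hT]
  ring


lemma cut_structure {V : Type*} [Fintype V] (G : SimpleGraph V) {r n : ℕ}
    (hcard : Fintype.card V = n) (hrn : r + 2 ≤ n) (hconn : vertexConnectivity G = r) :
    ∃ A B : Finset V, A.Nonempty ∧ B.Nonempty ∧ Disjoint A B ∧ A.card + B.card = n - r ∧
      ∀ a ∈ A, ∀ b ∈ B, ¬ G.Adj a b := by
  have hne : {k | ∃ S : Set V, S.ncard = k ∧
      (¬ (G.induce (Sᶜ : Set V)).Connected ∨ (Sᶜ : Set V).ncard = 1)}.Nonempty := by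
    refine ⟨Fintype.card V, Set.univ, by simp [Set.ncard_univ, Nat.card_eq_fintype_card], Or.inl ?_⟩
    intro hc
    have : Nonempty ((Set.univ : Set V)ᶜ : Set V) := hc.nonempty
    simp at this
  have hrmem : r ∈ {k | ∃ S : Set V, S.ncard = k ∧
      (¬ (G.induce (Sᶜ : Set V)).Connected ∨ (Sᶜ : Set V).ncard = 1)} := by
    rw [← hconn]
    exact Nat.sInf_mem hne
  obtain ⟨S, hS, hcut⟩ := hrmem
  have hScompl : (Sᶜ : Set V).ncard = n - r := by
    have := Set.ncard_add_ncard_compl S (Set.toFinite S)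
    rw [hS, Nat.card_eq_fintype_card, hcard] at this
    omega
  have hnc : ¬ (G.induce (Sᶜ : Set V)).Connected := by
    rcases hcut with h | h
    · exact h
    · omega
  have hcne : Nonempty (Sᶜ : Set V) :=
    Set.nonempty_coe_sort.mpr (Set.nonempty_of_ncard_ne_zero (by omega))
  rw [SimpleGraph.connected_iff] at hnc
  push_neg at hnc
  have hpre : ¬ (G.induce (Sᶜ : Set V)).Preconnected := fun hp => (hnc hp).false hcne.some
  rw [SimpleGraph.Preconnected] at hpre
  push_neg at hpre
  obtain ⟨x, y, hxy⟩ := hpre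
  set A : Finset V := Finset.univ.filter
    (fun z : V => ∃ h : z ∈ (Sᶜ : Set V), (G.induce (Sᶜ : Set V)).Reachable x ⟨z, h⟩) with hA
  set B : Finset V := Finset.univ.filter
    (fun z : V => ∃ h : z ∈ (Sᶜ : Set V), ¬ (G.induce (Sᶜ : Set V)).Reachable x ⟨z, h⟩) with hB
  refine ⟨A, B, ⟨x.1, ?_⟩, ⟨y.1, ?_⟩, ?_, ?_, ?_⟩
  · simp only [hA, Finset.mem_filter, Finset.mem_univ, true_and]
    exact ⟨x.2, by exact Reachable.refl _⟩
  · simp only [hB, Finset.mem_filter, Finset.mem_univ, true_and]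
    exact ⟨y.2, hxy⟩
  · rw [Finset.disjoint_left]
    rintro z h1 h2
    simp only [hA, hB, Finset.mem_filter, Finset.mem_univ, true_and] at h1 h2
    obtain ⟨hz, hre⟩ := h1
    obtain ⟨hz', hnre⟩ := h2
    exact hnre hre
  · have hunion : A ∪ B = (Sᶜ : Set V).toFinset := by
      ext z
      simp only [hA, hB, Finset.mem_union, Finset.mem_filter, Finset.mem_univ, true_and,
        Set.mem_toFinset]
      constructor
      · rintro (⟨h, -⟩ | ⟨h, -⟩) <;> exact h
      · intro h
        by_cases hre : (G.induce (Sᶜ : Set V)).Reachable x ⟨z, h⟩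
        · exact Or.inl ⟨h, hre⟩
        · exact Or.inr ⟨h, hre⟩
    have hdisj : Disjoint A B := by
      rw [Finset.disjoint_left]
      rintro z h1 h2
      simp only [hA, hB, Finset.mem_filter, Finset.mem_univ, true_and] at h1 h2
      exact h2.2 h1.2
    have := Finset.card_union_of_disjoint hdisj
    rw [hunion] at this
    rw [← this, ← Set.ncard_eq_toFinset_card']
    exact hScompl
  · rintro a ha b hb hadj
    simp only [hA, Finset.mem_filter, Finset.mem_univ, true_and] at ha
    simp only [hB, Finset.mem_filter, Finset.mem_univ, true_and] at hb
    obtain ⟨haS, hare⟩ := ha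
    obtain ⟨hbS, hbre⟩ := hb
    have hadj' : (G.induce (Sᶜ : Set V)).Adj ⟨a, haS⟩ ⟨b, hbS⟩ := by
      simp [SimpleGraph.comap_adj, hadj]
    exact hbre (hare.trans hadj'.reachable)


lemma build_iso {V : Type*} [Fintype V] {G : SimpleGraph V} {n r : ℕ} (hr : 1 ≤ r)
    (hrn : r + 2 ≤ n) (hcard : Fintype.card V = n) (v : V) (B' : Finset V) (hvB : v ∉ B')
    (hBcard : B'.card = n - 1 - r)
    (hadj : ∀ x y : V, G.Adj x y ↔ x ≠ y ∧ ¬(x = v ∧ y ∈ B') ∧ ¬(y = v ∧ x ∈ B')) :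
    Nonempty (G ≃g Knr n r) := by
  set C : Finset V := Finset.univ \ (insert v B') with hCdef
  have hCcard : C.card = r := by
    rw [hCdef, Finset.card_sdiff_of_subset (Finset.subset_univ _), Finset.card_univ, hcard,
      Finset.card_insert_of_notMem hvB, hBcard]
    omega
  have hvC : v ∉ C := by simp [hCdef]
  have hBC : ∀ x, x ∈ B' → x ∉ C := by intro x hx; simp [hCdef, hx]
  have htri : ∀ x : V, x ∉ B' → x ∉ C → x = v := by
    intro x hx1 hx2
    simp only [hCdef, Finset.mem_sdiff, Finset.mem_univ, true_and, not_not,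
      Finset.mem_insert] at hx2
    tauto
  have e1 : (C : Finset V) ≃ Fin r := by
    apply Fintype.equivFinOfCardEq
    rw [Fintype.card_coe, hCcard]
  have e2 : (B' : Finset V) ≃ Fin (n - 1 - r) := by
    apply Fintype.equivFinOfCardEq
    rw [Fintype.card_coe, hBcard]
  set f : V → Fin n := fun x =>
    if h : x ∈ B' then ⟨r + (e2 ⟨x, h⟩ : ℕ), by have := (e2 ⟨x, h⟩).isLt; omega⟩
    else if h' : x ∈ C then ⟨(e1 ⟨x, h'⟩ : ℕ), by have := (e1 ⟨x, h'⟩).isLt; omega⟩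
    else ⟨n - 1, by omega⟩ with hfdef
  have hfB : ∀ x (h : x ∈ B'), (f x : ℕ) = r + (e2 ⟨x, h⟩ : ℕ) := by
    intro x h; simp [hfdef, h]
  have hfC : ∀ x (h : x ∈ C), (f x : ℕ) = (e1 ⟨x, h⟩ : ℕ) := by
    intro x h
    have hxB : x ∉ B' := fun hh => hBC x hh h
    simp [hfdef, hxB, h]
  have hfv : (f v : ℕ) = n - 1 := by simp [hfdef, hvB, hvC]
  -- range facts
  have hrangeB : ∀ x, x ∈ B' → r ≤ (f x : ℕ) ∧ (f x : ℕ) < n - 1 := by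
    intro x h
    rw [hfB x h]
    have := (e2 ⟨x, h⟩).isLt
    omega
  have hrangeC : ∀ x, x ∈ C → (f x : ℕ) < r := by
    intro x h
    rw [hfC x h]
    have hxB : x ∉ B' := fun hh => hBC x hh h
    exact (e1 ⟨x, h⟩).isLt
  have hlast : ∀ x, (f x : ℕ) = n - 1 ↔ x = v := by
    intro x
    constructor
    · intro hx
      by_cases h1 : x ∈ B'
      · have := hrangeB x h1; omega
      · by_cases h2 : x ∈ C
        · have := hrangeC x h2; omega
        · exact htri x h1 h2
    · rintro rfl; exact hfv
  have hltr : ∀ x, (f x : ℕ) < r ↔ x ∈ C := by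
    intro x
    constructor
    · intro hx
      by_cases h1 : x ∈ B'
      · have := hrangeB x h1; omega
      · by_cases h2 : x ∈ C
        · exact h2
        · rw [htri x h1 h2] at hx; rw [hfv] at hx; omega
    · exact hrangeC x
  have hinj : Function.Injective f := by
    intro x y hxy
    have hval : (f x : ℕ) = (f y : ℕ) := by rw [hxy]
    by_cases hx1 : x ∈ B'
    · by_cases hy1 : y ∈ B'
      · rw [hfB x hx1, hfB y hy1] at hval
        have h' : (e2 ⟨x, hx1⟩) = (e2 ⟨y, hy1⟩) := Fin.ext (by omega)
        exact congrArg Subtype.val (e2.injective h')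
      · by_cases hy2 : y ∈ C
        · have := hrangeB x hx1; have := hrangeC y hy2; omega
        · have hyv := htri y hy1 hy2
          have := hrangeB x hx1
          rw [hyv, hfv] at hval
          omega
    · by_cases hx2 : x ∈ C
      · by_cases hy1 : y ∈ B'
        · have := hrangeC x hx2; have := hrangeB y hy1; omega
        · by_cases hy2 : y ∈ C
          · rw [hfC x hx2, hfC y hy2] at hval
            have h' : (e1 ⟨x, hx2⟩) = (e1 ⟨y, hy2⟩) := Fin.ext hval
            exact congrArg Subtype.val (e1.injective h')
          · have hyv := htri y hy1 hy2
            have := hrangeC x hx2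
            rw [hyv, hfv] at hval
            omega
      · have hxv := htri x hx1 hx2
        by_cases hy1 : y ∈ B'
        · have := hrangeB y hy1; rw [hxv, hfv] at hval; omega
        · by_cases hy2 : y ∈ C
          · have := hrangeC y hy2; rw [hxv, hfv] at hval; omega
          · rw [hxv, htri y hy1 hy2]
  have hbij : Function.Bijective f := by
    rw [Fintype.bijective_iff_injective_and_card]
    exact ⟨hinj, by simp [hcard]⟩
  set e : V ≃ Fin n := Equiv.ofBijective f hbij with hedef
  refine ⟨⟨e, ?_⟩⟩
  intro x y
  show (Knr n r).Adj (f x) (f y) ↔ G.Adj x y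
  rw [Knr_adj (by omega) (f x) (f y), hadj x y]
  constructor
  · rintro ⟨hne, h1, h2⟩
    refine ⟨fun h => hne (by rw [h]), ?_, ?_⟩
    · rintro ⟨rfl, hyB⟩
      have := h1 hfv
      rw [hltr] at this
      exact hBC y hyB this
    · rintro ⟨rfl, hxB⟩
      have := h2 hfv
      rw [hltr] at this
      exact hBC x hxB this
  · rintro ⟨hne, h1, h2⟩
    refine ⟨fun h => hne (hinj h), ?_, ?_⟩
    · intro hfx
      rw [hlast] at hfx
      subst hfx
      rw [hltr]
      by_cases hyB : y ∈ B'
      · exact absurd ⟨rfl, hyB⟩ h1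
      · by_cases hyC : y ∈ C
        · exact hyC
        · first
          | exact absurd (htri y hyB hyC).symm hne
          | exact absurd (htri y hyB hyC) (fun h => hne h.symm)
    · intro hfy
      rw [hlast] at hfy
      subst hfy
      rw [hltr]
      by_cases hxB : x ∈ B'
      · exact absurd ⟨rfl, hxB⟩ h2
      · by_cases hxC : x ∈ C
        · exact hxC
        · first
          | exact absurd (htri x hxB hxC) hne
          | exact absurd (htri x hxB hxC) (fun h => hne h.symm)

lemma Knr_dist2 {n r : ℕ} (hr : 1 ≤ r) (hrn : r + 2 ≤ n) :
    ∀ a b : Fin n, a ≠ b → ¬ (Knr n r).Adj a b → (Knr n r).dist a b = 2 := by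
  intro a b hne hnadj
  have ha : (a:ℕ) < n := a.isLt
  have hb : (b:ℕ) < n := b.isLt
  have hne' : (a:ℕ) ≠ (b:ℕ) := fun h => hne (Fin.ext h)
  set z : Fin n := ⟨0, by omega⟩ with hz
  have hz0 : (z:ℕ) = 0 := rfl
  have hKn := Knr_adj (n := n) (r := r) (by omega)
  have hstr : ((a:ℕ) = n-1 ∧ r ≤ (b:ℕ)) ∨ ((b:ℕ) = n-1 ∧ r ≤ (a:ℕ)) := by
    rw [hKn a b] at hnadj
    push_neg at hnadj
    have hh := hnadj hne
    by_cases hA : (a:ℕ) = n-1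
    · by_cases hbr : (b:ℕ) < r
      · have := hh (fun _ => hbr); omega
      · exact Or.inl ⟨hA, by omega⟩
    · have := hh (fun h => absurd h hA)
      exact Or.inr ⟨this.1, this.2⟩
  have haz : (a:ℕ) ≠ 0 := by rcases hstr with ⟨h1, h2⟩ | ⟨h1, h2⟩ <;> omega
  have hbz : (b:ℕ) ≠ 0 := by rcases hstr with ⟨h1, h2⟩ | ⟨h1, h2⟩ <;> omega
  have h1 : (Knr n r).Adj a z := by
    rw [hKn a z]
    refine ⟨fun h => ?_, fun _ => by rw [hz0]; omega, fun h => by rw [hz0] at h; omega⟩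
    rw [Fin.ext_iff, hz0] at h
    exact haz h
  have h2 : (Knr n r).Adj z b := by
    rw [hKn z b]
    refine ⟨fun h => ?_, fun h => by rw [hz0] at h; omega, fun _ => by rw [hz0]; omega⟩
    rw [Fin.ext_iff, hz0] at h
    exact hbz h.symm
  exact dist_eq_two hne hnadj h1 h2

lemma extract_iso {V : Type*} [Fintype V] {G : SimpleGraph V} {n r : ℕ} (hr : 1 ≤ r)
    (hrn : r + 2 ≤ n) (hcard : Fintype.card V = n) (A B : Finset V) (hA1 : A.card = 1)
    (hBcard : B.card = n - r - 1) (hdisj : Disjoint A B)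
    (hPeq : (A ×ˢ B) ∪ (B ×ˢ A) = badP G) :
    Nonempty (G ≃g Knr n r) := by
  obtain ⟨v, rfl⟩ := Finset.card_eq_one.mp hA1
  have hvB : v ∉ B := Finset.disjoint_left.mp hdisj (Finset.mem_singleton_self v)
  refine build_iso hr hrn hcard v B hvB (by omega) ?_
  intro x y
  constructor
  · intro h
    refine ⟨h.ne, ?_, ?_⟩
    · rintro ⟨rfl, hyB⟩
      have hmem : (x, y) ∈ badP G := by
        rw [← hPeq]
        exact Finset.mem_union_left _ (Finset.mem_product.mpr
          ⟨Finset.mem_singleton_self x, hyB⟩)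
      simp only [badP, Finset.mem_filter] at hmem
      exact hmem.2.2 h
    · rintro ⟨rfl, hxB⟩
      have hmem : (x, y) ∈ badP G := by
        rw [← hPeq]
        exact Finset.mem_union_right _ (Finset.mem_product.mpr
          ⟨hxB, Finset.mem_singleton_self y⟩)
      simp only [badP, Finset.mem_filter] at hmem
      exact hmem.2.2 h
  · rintro ⟨hne, h1, h2⟩
    by_contra hnadj
    have hmem : (x, y) ∈ badP G := by
      simp only [badP, Finset.mem_filter, Finset.mem_univ, true_and]
      exact ⟨hne, hnadj⟩
    rw [← hPeq] at hmem
    rcases Finset.mem_union.mp hmem with h | h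
    · obtain ⟨hx, hy⟩ := Finset.mem_product.mp h
      exact h1 ⟨Finset.mem_singleton.mp hx, hy⟩
    · obtain ⟨hx, hy⟩ := Finset.mem_product.mp h
      exact h2 ⟨Finset.mem_singleton.mp hy, hx⟩

/-- For `1 ≤ r ≤ n − 2`, `K(n−1, r)` is the unique maximizer of the Harary index among
graphs of order `n` with vertex connectivity `r`. -/
theorem harary_le_Knr_of_vertexConnectivity (n r : ℕ) (hr : 1 ≤ r) (hrn : r + 2 ≤ n)
    {V : Type*} [Fintype V] (G : SimpleGraph V) (hcard : Fintype.card V = n)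
    (hconn : vertexConnectivity G = r) :
    hararyIndex G ≤ hararyIndex (Knr n r) ∧
      (hararyIndex G = hararyIndex (Knr n r) ↔ Nonempty (G ≃g Knr n r)) := by
  -- the value of the Harary index of `Knr n r`
  have hK : hararyIndex (Knr n r) =
      (((n : ℝ) * n - n) - (2 * (n - 1 - r) : ℕ) / 2) / 2 := by
    have h := harary_eq_aux (Knr n r) (Knr_dist2 hr hrn)
    rw [card_badP_Knr hr hrn, Fintype.card_fin] at h
    exact h
  -- the general upper bound for `G`
  have hGle : hararyIndex G ≤ (((n : ℝ) * n - n) - ((badP G).card : ℝ) / 2) / 2 := by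
    have h := harary_le_aux G
    rw [hcard] at h
    exact h
  -- cut structure
  obtain ⟨A, B, hAne, hBne, hdisj, hsum, hnadj⟩ := cut_structure G hcard hrn hconn
  have hsub : (A ×ˢ B) ∪ (B ×ˢ A) ⊆ badP G := by
    intro p hp
    simp only [badP, Finset.mem_filter, Finset.mem_univ, true_and]
    rcases Finset.mem_union.mp hp with h | h
    · obtain ⟨h1, h2⟩ := Finset.mem_product.mp h
      exact ⟨fun he => Finset.disjoint_left.mp hdisj h1 (he ▸ h2),
        hnadj _ h1 _ h2⟩
    · obtain ⟨h1, h2⟩ := Finset.mem_product.mp h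
      exact ⟨fun he => (Finset.disjoint_left.mp hdisj h2) (he ▸ h1),
        fun ha => hnadj _ h2 _ h1 ha.symm⟩
  have hdisjprod : Disjoint (A ×ˢ B) (B ×ˢ A) := by
    rw [Finset.disjoint_left]
    rintro ⟨x, y⟩ h1 h2
    obtain ⟨ha, -⟩ := Finset.mem_product.mp h1
    obtain ⟨hb, -⟩ := Finset.mem_product.mp h2
    exact Finset.disjoint_left.mp hdisj ha hb
  have hucard : ((A ×ˢ B) ∪ (B ×ˢ A)).card = 2 * (A.card * B.card) := by
    rw [Finset.card_union_of_disjoint hdisjprod, Finset.card_product, Finset.card_product]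
    ring
  have hA1 : 1 ≤ A.card := hAne.card_pos
  have hB1 : 1 ≤ B.card := hBne.card_pos
  have hab_ge : A.card + B.card - 1 ≤ A.card * B.card := by
    obtain ⟨a', ha'⟩ := Nat.exists_eq_add_of_le hA1
    obtain ⟨b', hb'⟩ := Nat.exists_eq_add_of_le hB1
    rw [ha', hb']
    have : (1 + a') * (1 + b') = 1 + a' + b' + a' * b' := by ring
    omega
  have hlow : 2 * (n - r - 1) ≤ (badP G).card := by
    have h1 : ((A ×ˢ B) ∪ (B ×ˢ A)).card ≤ (badP G).card := Finset.card_le_card hsub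
    rw [hucard] at h1
    omega
  have hle : hararyIndex G ≤ hararyIndex (Knr n r) := by
    rw [hK]
    refine le_trans hGle ?_
    have : ((2 * (n - 1 - r) : ℕ) : ℝ) ≤ ((badP G).card : ℝ) := by
      exact_mod_cast (by omega : 2 * (n - 1 - r) ≤ (badP G).card)
    linarith
  refine ⟨hle, ?_, ?_⟩
  · -- equality implies isomorphism
    intro heq
    have hup : (badP G).card ≤ 2 * (n - 1 - r) := by
      have h1 : hararyIndex (Knr n r) ≤
          (((n : ℝ) * n - n) - ((badP G).card : ℝ) / 2) / 2 := heq ▸ hGle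
      rw [hK] at h1
      have h2 : ((badP G).card : ℝ) ≤ ((2 * (n - 1 - r) : ℕ) : ℝ) := by linarith
      exact_mod_cast h2
    have hPcard : (badP G).card = 2 * (n - 1 - r) := le_antisymm hup (by omega)
    set m := A.card * B.card with hm
    have hmle : 2 * m ≤ 2 * (n - 1 - r) := by
      have h1 : ((A ×ˢ B) ∪ (B ×ˢ A)).card ≤ (badP G).card := Finset.card_le_card hsub
      rw [hucard, hPcard] at h1
      exact h1
    have hmeq : m = n - r - 1 := by omega
    have hone : A.card = 1 ∨ B.card = 1 := by
      by_contra h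
      push_neg at h
      have ha2 : 2 ≤ A.card := by omega
      have hb2 : 2 ≤ B.card := by omega
      have := Nat.add_le_mul ha2 hb2
      omega
    have hPeq : (A ×ˢ B) ∪ (B ×ˢ A) = badP G :=
      Finset.eq_of_subset_of_card_le hsub (by rw [hucard, hPcard]; omega)
    rcases hone with h1 | h1
    · exact extract_iso hr hrn hcard A B h1 (by omega) hdisj hPeq
    · refine extract_iso hr hrn hcard B A h1 (by omega) hdisj.symm ?_
      rw [Finset.union_comm]
      exact hPeq
  · rintro ⟨f⟩
    exact harary_iso f
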